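/- For every codeword x ∈ C and every received pair vector ŷ ∈ (Σ²)^n, one has ŷ ∈ B(x) if and only if ŷ₀ ∈ B(0), where 0 is the all-zeros codeword. -/
import Mathlib


open scoped BigOperators

/-- Symbol pairs: elements of Σ² with Σ = {0,1} represented as `ZMod 2`. -/
abbrev Pair := ZMod 2 × ZMod 2

/-- Cyclic successor index: `i + 1 (mod n)`. -/
def nxt {n : ℕ} (i : Fin n) : Fin n := ⟨(i.val + 1) % n, Nat.mod_lt _ i.pos⟩

/-- Embedding of a binary vector into `ℝ^n`. -/
def emb {n : ℕ} (x : Fin n → ZMod 2) : Fin n → ℝ := fun i => ((x i).val : ℝ)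

/-- The binary linear code with parity-check matrix `H`. -/
def code {m n : ℕ} (H : Fin m → Fin n → ZMod 2) : Set (Fin n → ZMod 2) :=
  {x | ∀ j, ∑ i, H j i * x i = 0}

/-- The local (single parity check) code of row `j` of `H`. -/
def localCode {m n : ℕ} (H : Fin m → Fin n → ZMod 2) (j : Fin m) : Set (Fin n → ZMod 2) :=
  {x | ∑ i, H j i * x i = 0}

/-- The fundamental polytope `Q(H)`: intersection of convex hulls of local codes. -/
def fundPolytope {m n : ℕ} (H : Fin m → Fin n → ZMod 2) : Set (Fin n → ℝ) :=
  ⋂ j, convexHull ℝ (emb '' localCode H j)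

/-- The LP feasible region `P(H)` of pairs `(x, τ)`. -/
def feasible {m n : ℕ} (H : Fin m → Fin n → ZMod 2) :
    Set ((Fin n → ℝ) × (Fin n → Pair → ℝ)) :=
  {xt | (∀ i ab, xt.2 i ab ∈ Set.Icc (0 : ℝ) 1) ∧
        (∀ i, ∑ ab : Pair, xt.2 i ab = 1) ∧
        (∀ i, xt.1 i = xt.2 i (1, 0) + xt.2 i (1, 1)) ∧
        (∀ i, xt.1 (nxt i) = xt.2 i (0, 1) + xt.2 i (1, 1)) ∧
        xt.1 ∈ fundPolytope H}

/-- `T(x)`: the indicator vector of the symbol-pair read vector `π(x)`. -/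
def indic {n : ℕ} (x : Fin n → ZMod 2) : Fin n → Pair → ℝ :=
  fun i ab => if (x i, x (nxt i)) = ab then 1 else 0

/-- Channel transition probability `p(y | a)` of the symbol-pair read channel. -/
noncomputable def chan (p : ℝ) (y a : Pair) : ℝ := if y = a then 1 - p else p / 3

/-- Likelihood `p(ŷ | x)` of the received pair vector `ŷ` given codeword `x`. -/
noncomputable def lik {n : ℕ} (p : ℝ) (y : Fin n → Pair) (x : Fin n → ZMod 2) : ℝ :=
  ∏ i, chan p (y i) (x i, x (nxt i))

/-- The cost vector `λ = Λ(ŷ)`, `λ_{i,(a,b)} = -ln p(ŷ_i | (a,b))`. -/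
noncomputable def Lam {n : ℕ} (p : ℝ) (y : Fin n → Pair) : Fin n → Pair → ℝ :=
  fun i ab => -Real.log (chan p (y i) ab)

/-- The pairing `⟨λ, τ⟩ = Σ_i Σ_{(a,b)} λ_{i,(a,b)} τ_{i,(a,b)}`. -/
def innerP {n : ℕ} (l t : Fin n → Pair → ℝ) : ℝ := ∑ i, ∑ ab : Pair, l i ab * t i ab

/-- The fractional pair weight `W_fp`. -/
def Wfp {n : ℕ} (x : Fin n → ℝ) : ℝ := ∑ i, max (x i) (x (nxt i))

/-- The set `B(x)` of received vectors causing LP decoding failure when `x` was sent. -/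
def Bset {m n : ℕ} (H : Fin m → Fin n → ZMod 2) (p : ℝ) (x : Fin n → ZMod 2) :
    Set (Fin n → Pair) :=
  {y | ∃ xt ∈ feasible H, xt.1 ≠ emb x ∧ innerP (Lam p y) xt.2 ≤ innerP (Lam p y) (indic x)}


section Aux

lemma bit_add_self (a : ZMod 2) : a + a = 0 := by revert a; decide

lemma two_cases (a : ZMod 2) : a = 0 ∨ a = 1 := by revert a; decide

lemma pair_add_self (c : Pair) : c + c = 0 := by revert c; decide

lemma pair_cancel (c u : Pair) : u + c + c = u := by
  rw [add_assoc, pair_add_self, add_zero]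

/-- sign of a bit -/
noncomputable def sgn (a : ZMod 2) : ℝ := 1 - 2 * (a.val : ℝ)

lemma sgn_zero : sgn 0 = 1 := by
  rw [sgn, show ((0 : ZMod 2)).val = 0 from rfl]; norm_num

lemma sgn_one : sgn 1 = -1 := by
  rw [sgn, show ((1 : ZMod 2)).val = 1 from rfl]; norm_num

lemma val_add_real (a b : ZMod 2) :
    (((a + b) : ZMod 2).val : ℝ) = sgn b * (a.val : ℝ) + (b.val : ℝ) := by
  have h : ((a+b).val : ℤ) + 2*(a.val*b.val) = a.val + b.val := by revert a b; decide
  have h' : (((a+b).val : ℝ)) + 2*((a.val:ℝ)*(b.val:ℝ)) = (a.val:ℝ) + (b.val:ℝ) := by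
    exact_mod_cast congrArg (fun t : ℤ => (t : ℝ)) h
  unfold sgn; linarith

/-- The affine reflection map determined by a binary vector `z`. -/
noncomputable def affZ {n : ℕ} (z : Fin n → ZMod 2) : (Fin n → ℝ) →ᵃ[ℝ] (Fin n → ℝ) where
  toFun := fun v i => sgn (z i) * v i + ((z i).val : ℝ)
  linear := LinearMap.pi (fun i => sgn (z i) • LinearMap.proj i)
  map_vadd' := by
    intro pt v; funext i
    simp [LinearMap.pi_apply]
    ring

lemma affZ_apply {n : ℕ} (z : Fin n → ZMod 2) (v : Fin n → ℝ) (i : Fin n) :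
    affZ z v i = sgn (z i) * v i + ((z i).val : ℝ) := rfl

lemma affZ_emb {n : ℕ} (z w : Fin n → ZMod 2) :
    affZ z (emb w) = emb (fun i => w i + z i) := by
  funext i
  rw [affZ_apply]
  simp only [emb]
  rw [val_add_real]

lemma affZ_invol {n : ℕ} (z : Fin n → ZMod 2) (v : Fin n → ℝ) :
    affZ z (affZ z v) = v := by
  funext i
  rw [affZ_apply, affZ_apply]
  rcases two_cases (z i) with h | h <;> rw [h]
  · rw [sgn_zero, show ((0 : ZMod 2)).val = 0 from rfl]; push_cast; ring
  · rw [sgn_one, show ((1 : ZMod 2)).val = 1 from rfl]; push_cast; ring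

lemma localCode_add {m n : ℕ} (H : Fin m → Fin n → ZMod 2) (j : Fin m)
    {w z : Fin n → ZMod 2} (hw : w ∈ localCode H j) (hz : z ∈ localCode H j) :
    (fun i => w i + z i) ∈ localCode H j := by
  simp only [localCode, Set.mem_setOf_eq] at *
  simp only [mul_add, Finset.sum_add_distrib, hw, hz, add_zero]

lemma fund_shift {m n : ℕ} (H : Fin m → Fin n → ZMod 2) {z : Fin n → ZMod 2}
    (hz : z ∈ code H) {v : Fin n → ℝ} (hv : v ∈ fundPolytope H) :
    affZ z v ∈ fundPolytope H := by
  simp only [fundPolytope, Set.mem_iInter] at hv ⊢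
  intro j
  have h1 : affZ z v ∈ affZ z '' (convexHull ℝ (emb '' localCode H j)) :=
    ⟨v, hv j, rfl⟩
  rw [AffineMap.image_convexHull] at h1
  refine convexHull_mono ?_ h1
  rintro _ ⟨_, ⟨w, hw, rfl⟩, rfl⟩
  exact ⟨fun i => w i + z i, localCode_add H j hw (hz j), (affZ_emb z w).symm⟩

lemma pair_shift_iff (X C ab : Pair) : X + C = ab ↔ X = ab + C := by
  constructor
  · intro h; rw [← h, pair_cancel]
  · intro h; rw [h, pair_cancel]

lemma chan_shift (p : ℝ) (y c ab : Pair) : chan p (y + c) ab = chan p y (ab + c) := by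
  unfold chan
  congr 1
  simp only [eq_iff_iff]
  exact pair_shift_iff y c ab

lemma sum_pair (f : Pair → ℝ) : ∑ ab, f ab = f (0,0) + f (0,1) + f (1,0) + f (1,1) := by
  rw [Fintype.sum_prod_type]
  rw [show (Finset.univ : Finset (ZMod 2)) = {0,1} by decide]
  rw [Finset.sum_insert (by decide), Finset.sum_singleton,
      Finset.sum_insert (by decide), Finset.sum_singleton,
      Finset.sum_insert (by decide), Finset.sum_singleton]
  ring

lemma innerP_shift {n : ℕ} (l t : Fin n → Pair → ℝ) (c : Fin n → Pair) :
    innerP (fun i ab => l i (ab + c i)) (fun i ab => t i (ab + c i)) = innerP l t := by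
  unfold innerP
  refine Finset.sum_congr rfl (fun i _ => ?_)
  exact Fintype.sum_equiv (Equiv.addRight (c i)) _ _ (fun ab => rfl)

lemma shift_mem {n m : ℕ} (H : Fin m → Fin n → ZMod 2) (p : ℝ)
    (x z : Fin n → ZMod 2) (hz : z ∈ code H) (y : Fin n → Pair)
    (hy : y ∈ Bset H p x) :
    (fun i => y i + (z i, z (nxt i))) ∈ Bset H p (fun i => x i + z i) := by
  obtain ⟨⟨v, t⟩, ⟨h01, hsum, hfst, hsnd, hQ⟩, hne, hle⟩ := hy
  dsimp only at h01 hsum hfst hsnd hQ hne hle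
  set c : Fin n → Pair := fun i => (z i, z (nxt i)) with hc
  set t' : Fin n → Pair → ℝ := fun i ab => t i (ab + c i) with ht'
  -- Lam shift
  have hLam : Lam p (fun i => y i + c i) = fun i ab => Lam p y i (ab + c i) := by
    funext i ab
    simp only [Lam]
    rw [chan_shift]
  -- indic shift
  have hIndic : indic (fun i => x i + z i) = fun i ab => indic x i (ab + c i) := by
    funext i ab
    simp only [indic]
    rw [show ((x i + z i, x (nxt i) + z (nxt i)) : Pair)
          = (x i, x (nxt i)) + (z i, z (nxt i)) from rfl]
    congr 1
    simp only [eq_iff_iff, hc]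
    exact pair_shift_iff _ _ _
  refine ⟨(affZ z v, t'), ⟨?_, ?_, ?_, ?_, fund_shift H hz hQ⟩, ?_, ?_⟩
  · intro i ab; exact h01 i (ab + c i)
  · intro i
    calc ∑ ab : Pair, t' i ab = ∑ ab : Pair, t i ab :=
          Fintype.sum_equiv (Equiv.addRight (c i)) _ _ (fun ab => rfl)
      _ = 1 := hsum i
  · intro i
    have hS := sum_pair (t i)
    rw [hsum i] at hS
    have hf := hfst i
    show affZ z v i = t i ((1,0) + c i) + t i ((1,1) + c i)
    rw [affZ_apply, hc]
    dsimp only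
    rcases two_cases (z i) with h | h <;>
      rcases two_cases (z (nxt i)) with h' | h' <;>
      rw [h, h'] <;>
      simp only [sgn_zero, sgn_one,
        show ((0 : ZMod 2)).val = 0 from rfl, show ((1 : ZMod 2)).val = 1 from rfl,
        Nat.cast_zero, Nat.cast_one,
        show ((1,0)+(0,0) : Pair) = (1,0) from by decide,
        show ((1,1)+(0,0) : Pair) = (1,1) from by decide,
        show ((1,0)+(0,1) : Pair) = (1,1) from by decide,
        show ((1,1)+(0,1) : Pair) = (1,0) from by decide,
        show ((1,0)+(1,0) : Pair) = (0,0) from by decide,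
        show ((1,1)+(1,0) : Pair) = (0,1) from by decide,
        show ((1,0)+(1,1) : Pair) = (0,1) from by decide,
        show ((1,1)+(1,1) : Pair) = (0,0) from by decide] <;>
      linarith [hf, hS]
  · intro i
    have hS := sum_pair (t i)
    rw [hsum i] at hS
    have hs := hsnd i
    show affZ z v (nxt i) = t i ((0,1) + c i) + t i ((1,1) + c i)
    rw [affZ_apply, hc]
    dsimp only
    rcases two_cases (z i) with h | h <;>
      rcases two_cases (z (nxt i)) with h' | h' <;>
      rw [h, h'] <;>
      simp only [sgn_zero, sgn_one,
        show ((0 : ZMod 2)).val = 0 from rfl, show ((1 : ZMod 2)).val = 1 from rfl,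
        Nat.cast_zero, Nat.cast_one,
        show ((0,1)+(0,0) : Pair) = (0,1) from by decide,
        show ((1,1)+(0,0) : Pair) = (1,1) from by decide,
        show ((0,1)+(0,1) : Pair) = (0,0) from by decide,
        show ((1,1)+(0,1) : Pair) = (1,0) from by decide,
        show ((0,1)+(1,0) : Pair) = (1,1) from by decide,
        show ((1,1)+(1,0) : Pair) = (0,1) from by decide,
        show ((0,1)+(1,1) : Pair) = (1,0) from by decide,
        show ((1,1)+(1,1) : Pair) = (0,0) from by decide] <;>
      linarith [hs, hS]
  · -- nonvanishing
    intro hcontra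
    apply hne
    dsimp only at hcontra
    have h2 : v = affZ z (emb (fun i => x i + z i)) := by
      rw [← hcontra, affZ_invol]
    rw [affZ_emb] at h2
    have h3 : (fun i => x i + z i + z i) = x :=
      funext fun i => by rw [add_assoc, bit_add_self, add_zero]
    rw [h2, h3]
  · rw [hLam, hIndic, ht']
    rw [innerP_shift (fun i ab => Lam p y i ab) t c,
        innerP_shift (fun i ab => Lam p y i ab) (indic x) c]
    exact hle

end Aux

/-- `ŷ ∈ B(x)` if and only if `ŷ₀ ∈ B(0)`. -/
theorem stmt11 {n m : ℕ} (hn : 2 ≤ n) (H : Fin m → Fin n → ZMod 2)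
    (p : ℝ) (hp0 : 0 < p) (hp1 : p < 3 / 4)
    (x : Fin n → ZMod 2) (hx : x ∈ code H)
    (y : Fin n → Pair) :
    y ∈ Bset H p x ↔ (fun i => y i + (x i, x (nxt i))) ∈ Bset H p 0 := by
  constructor
  · intro h
    have := shift_mem H p x x hx y h
    have hxx : (fun i => x i + x i) = (0 : Fin n → ZMod 2) := by
      funext i; exact bit_add_self (x i)
    rwa [hxx] at this
  · intro h
    have := shift_mem H p 0 x hx (fun i => y i + (x i, x (nxt i))) h
    have h1 : (fun i => (y i + (x i, x (nxt i))) + (x i, x (nxt i))) = y := by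
      funext i; rw [add_assoc, pair_add_self, add_zero]
    have h2 : (fun i => (0 : Fin n → ZMod 2) i + x i) = x := by
      funext i; simp
    rwa [h1, h2] at this
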